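/- Let 0 < s ≤ 1, let x ∈ ℝ² and r ∈ [1/2, 2], and let E ⊆ ℝ². Set η := H^s_∞(S(x,r) ∩ E) and γ := (η/16)^{1/s}, and assume 0 < η and γ ≤ 1/16. Then there exist three arcs h⁺, h⁻, h^× of the circle S(x,r) that are pairwise separated, namely dist(h, h') ≥ π^{−1}γ for any two distinct arcs h, h' among them, such that (1/8)·η ≤ H^s_∞(h ∩ E) ≤ (3/16)·η for each h ∈ {h⁺, h⁻, h^×}. -/

import Mathlib

open scoped ENNReal NNReal Real
set_option maxHeartbeats 1000000
open MeasureTheory Metric Set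

noncomputable def hausdorffContent {X : Type*} [PseudoEMetricSpace X] (d : ℝ) (A : Set X) :
    ℝ≥0∞ :=
  ⨅ (U : ℕ → Set X) (_ : A ⊆ ⋃ i, U i), ∑' i, EMetric.diam (U i) ^ d

namespace HCaux

variable {X : Type*} [PseudoEMetricSpace X]

theorem hc_mono (d : ℝ) {A B : Set X} (h : A ⊆ B) :
    hausdorffContent d A ≤ hausdorffContent d B := by
  unfold hausdorffContent
  exact le_iInf₂ fun U hU => iInf₂_le U (h.trans hU)

theorem hc_le_diam_rpow {d : ℝ} (hd : 0 < d) (A : Set X) :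
    hausdorffContent d A ≤ EMetric.diam A ^ d := by
  have hcov : A ⊆ ⋃ i : ℕ, (if i = 0 then A else (∅ : Set X)) := by
    intro a ha
    exact mem_iUnion.2 ⟨0, by simpa using ha⟩
  refine (iInf₂_le (fun i : ℕ => if i = 0 then A else (∅ : Set X)) hcov).trans ?_
  have : ∀ i : ℕ, EMetric.diam (if i = 0 then A else (∅ : Set X)) ^ d
      = if i = 0 then EMetric.diam A ^ d else 0 := by
    intro i
    by_cases h : i = 0 <;> simp [h, ENNReal.zero_rpow_of_pos hd, hd, EMetric.diam, Metric.ediam_empty]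
  rw [tsum_congr this, tsum_ite_eq]

theorem hc_union_le (d : ℝ) (A B : Set X) :
    hausdorffContent d (A ∪ B) ≤ hausdorffContent d A + hausdorffContent d B := by
  unfold hausdorffContent
  simp only [ENNReal.iInf_add, ENNReal.add_iInf]
  refine le_iInf₂ fun U hU => le_iInf₂ fun V hV => ?_
  set W : ℕ → Set X := fun n => if Even n then V (n / 2) else U (n / 2) with hW
  have hcov : A ∪ B ⊆ ⋃ i, W i := by
    rintro a (ha | ha)
    · obtain ⟨i, hi⟩ := mem_iUnion.1 (hV ha)
      exact mem_iUnion.2 ⟨2 * i, by simp [hW, Nat.mul_div_cancel_left i two_pos, hi]⟩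
    · obtain ⟨i, hi⟩ := mem_iUnion.1 (hU ha)
      refine mem_iUnion.2 ⟨2 * i + 1, ?_⟩
      have h1 : ¬ Even (2 * i + 1) := by simp [parity_simps]
      have h2 : (2 * i + 1) / 2 = i := by omega
      simp [hW, h1, h2, hi]
  refine (iInf₂_le W hcov).trans ?_
  rw [← tsum_even_add_odd (f := fun i => EMetric.diam (W i) ^ d) ENNReal.summable ENNReal.summable]
  have e1 : (∑' k : ℕ, EMetric.diam (W (2 * k)) ^ d) = ∑' k, EMetric.diam (V k) ^ d := by
    refine tsum_congr fun k => ?_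
    have : Even (2 * k) := even_two_mul k
    simp [hW, this, Nat.mul_div_cancel_left k two_pos]
  have e2 : (∑' k : ℕ, EMetric.diam (W (2 * k + 1)) ^ d) = ∑' k, EMetric.diam (U k) ^ d := by
    refine tsum_congr fun k => ?_
    have h1 : ¬ Even (2 * k + 1) := by simp [parity_simps]
    have h2 : (2 * k + 1) / 2 = k := by omega
    simp [hW, h1, h2]
  rw [e1, e2, add_comm]



noncomputable def cpar (x : EuclideanSpace ℝ (Fin 2)) (r θ : ℝ) : EuclideanSpace ℝ (Fin 2) :=
  WithLp.toLp 2 ![x 0 + r * Real.cos θ, x 1 + r * Real.sin θ]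

theorem dist_cpar (x : EuclideanSpace ℝ (Fin 2)) (r θ θ' : ℝ) :
    dist (cpar x r θ) (cpar x r θ') = 2 * |r| * |Real.sin ((θ - θ') / 2)| := by
  rw [EuclideanSpace.dist_eq, Fin.sum_univ_two]
  have h0 : (cpar x r θ) 0 = x 0 + r * Real.cos θ := rfl
  have h1 : (cpar x r θ) 1 = x 1 + r * Real.sin θ := rfl
  have h0' : (cpar x r θ') 0 = x 0 + r * Real.cos θ' := rfl
  have h1' : (cpar x r θ') 1 = x 1 + r * Real.sin θ' := rfl
  rw [h0, h1, h0', h1', Real.dist_eq, Real.dist_eq]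
  have key : |x 0 + r * Real.cos θ - (x 0 + r * Real.cos θ')| ^ 2
      + |x 1 + r * Real.sin θ - (x 1 + r * Real.sin θ')| ^ 2
      = (2 * r * Real.sin ((θ - θ') / 2)) ^ 2 := by
    rw [sq_abs, sq_abs]
    have hc : Real.cos (θ - θ') = Real.cos θ * Real.cos θ' + Real.sin θ * Real.sin θ' :=
      Real.cos_sub θ θ'
    have key2 : ∀ y : ℝ, Real.cos (2 * y) = 1 - 2 * Real.sin y ^ 2 := fun y => by
      rw [Real.cos_two_mul]; nlinarith [Real.sin_sq_add_cos_sq y]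
    have hd : Real.cos (θ - θ') = 1 - 2 * Real.sin ((θ - θ') / 2) ^ 2 := by
      conv_lhs => rw [show θ - θ' = 2 * ((θ - θ') / 2) by ring]
      exact key2 _
    have hθ := Real.sin_sq_add_cos_sq θ
    have hθ' := Real.sin_sq_add_cos_sq θ'
    linear_combination r^2*hθ + r^2*hθ' - 2*r^2*hd + 2*r^2*hc
  rw [key, Real.sqrt_sq_eq_abs, abs_mul, abs_mul]
  simp [abs_two]

theorem cpar_mem_sphere (x : EuclideanSpace ℝ (Fin 2)) {r : ℝ} (hr : 0 ≤ r) (θ : ℝ) :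
    cpar x r θ ∈ Metric.sphere x r := by
  rw [mem_sphere, EuclideanSpace.dist_eq, Fin.sum_univ_two]
  have h0 : (cpar x r θ) 0 = x 0 + r * Real.cos θ := rfl
  have h1 : (cpar x r θ) 1 = x 1 + r * Real.sin θ := rfl
  rw [h0, h1, Real.dist_eq, Real.dist_eq]
  have key : |x 0 + r * Real.cos θ - x 0| ^ 2 + |x 1 + r * Real.sin θ - x 1| ^ 2 = r ^ 2 := by
    rw [sq_abs, sq_abs]
    nlinarith [Real.sin_sq_add_cos_sq θ]
  rw [key, Real.sqrt_sq hr]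

theorem continuous_cpar (x : EuclideanSpace ℝ (Fin 2)) (r : ℝ) :
    Continuous (cpar x r) := by
  have h : Continuous (fun θ : ℝ => (fun i => ![x 0 + r * Real.cos θ, x 1 + r * Real.sin θ] i :
      Fin 2 → ℝ)) := by
    refine continuous_pi fun i => ?_
    fin_cases i
    · simp only [Matrix.cons_val_zero]
      exact continuous_const.add (continuous_const.mul Real.continuous_cos)
    · simp only [Matrix.cons_val_one, Matrix.head_cons]
      exact continuous_const.add (continuous_const.mul Real.continuous_sin)
  exact (EuclideanSpace.equiv (Fin 2) ℝ).symm.continuous.comp h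

theorem sphere_subset_cpar (x : EuclideanSpace ℝ (Fin 2)) {r : ℝ} (hr : 0 < r) :
    Metric.sphere x r ⊆ cpar x r '' Icc 0 (2 * π) := by
  intro y hy
  have hd : dist y x = r := mem_sphere.1 hy
  set a := y 0 - x 0 with ha
  set b := y 1 - x 1 with hb
  have habr : Real.sqrt (a ^ 2 + b ^ 2) = r := by
    rw [← hd, EuclideanSpace.dist_eq, Fin.sum_univ_two, Real.dist_eq, Real.dist_eq,
      sq_abs, sq_abs]
  have hab : a ^ 2 + b ^ 2 = r ^ 2 := by
    have h := congrArg (fun t => t ^ 2) habr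
    simpa [Real.sq_sqrt (by positivity : (0:ℝ) ≤ a ^ 2 + b ^ 2)] using h
  set z : ℂ := ⟨a, b⟩ with hz
  have hzabs : ‖z‖ = r := by
    rw [Complex.norm_def, Complex.normSq_mk]
    rw [show a * a + b * b = a ^ 2 + b ^ 2 by ring, hab, Real.sqrt_sq hr.le]
  have hz0 : z ≠ 0 := by
    intro h
    rw [h] at hzabs
    simp at hzabs
    exact hr.ne' hzabs.symm
  have hcos : Real.cos (Complex.arg z) = a / r := by
    rw [Complex.cos_arg hz0, hzabs]
  have hsin : Real.sin (Complex.arg z) = b / r := by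
    rw [Complex.sin_arg, hzabs]
  set θ : ℝ := if 0 ≤ Complex.arg z then Complex.arg z else Complex.arg z + 2 * π with hθ
  have harg1 := Complex.arg_le_pi z
  have harg2 := Complex.neg_pi_lt_arg z
  have hpi : 0 < π := Real.pi_pos
  have hθmem : θ ∈ Icc 0 (2 * π) := by
    rw [hθ]; split_ifs with h
    · constructor
      · exact h
      · linarith
    · constructor
      · push_neg at h; linarith
      · linarith
  have hcosθ : Real.cos θ = a / r := by
    rw [hθ]; split_ifs with h
    · exact hcos
    · rw [Real.cos_add_two_pi]; exact hcos
  have hsinθ : Real.sin θ = b / r := by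
    rw [hθ]; split_ifs with h
    · exact hsin
    · rw [Real.sin_add_two_pi]; exact hsin
  refine ⟨θ, hθmem, ?_⟩
  have hr' : r ≠ 0 := hr.ne'
  refine PiLp.ext fun i => ?_
  fin_cases i
  · show x 0 + r * Real.cos θ = y 0
    rw [hcosθ]; field_simp [ha]; rw [ha]; ring
  · show x 1 + r * Real.sin θ = y 1
    rw [hsinθ]; field_simp [hb]; rw [hb]; ring

theorem diam_cpar_le (x : EuclideanSpace ℝ (Fin 2)) {r u v : ℝ} (hr : 0 ≤ r) (huv : u ≤ v) :
    EMetric.diam (cpar x r '' Icc u v) ≤ ENNReal.ofReal (r * (v - u)) := by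
  refine EMetric.diam_le ?_
  rintro p ⟨θ, hθ, rfl⟩ q ⟨θ', hθ', rfl⟩
  rw [edist_dist, dist_cpar]
  refine ENNReal.ofReal_le_ofReal ?_
  have h1 : |Real.sin ((θ - θ') / 2)| ≤ |(θ - θ') / 2| := Real.abs_sin_le_abs
  have h2 : |(θ - θ') / 2| ≤ (v - u) / 2 := by
    rw [abs_div, abs_two]
    have : |θ - θ'| ≤ v - u := by
      rw [abs_le]
      constructor <;> [linarith [hθ.1, hθ'.2]; linarith [hθ.2, hθ'.1]]
    linarith
  rw [abs_of_nonneg hr]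
  nlinarith [abs_nonneg (Real.sin ((θ - θ') / 2))]

theorem dist_cpar_ge (x : EuclideanSpace ℝ (Fin 2)) {r α θ1 θ2 : ℝ} (hr : 0 < r)
    (hα : 0 < α) (hαpi : α ≤ π) (h1 : α ≤ θ2 - θ1) (h2 : θ2 - θ1 ≤ 2 * π - α) :
    2 * r * Real.sin (α / 2) ≤ dist (cpar x r θ1) (cpar x r θ2) := by
  rw [dist_cpar, abs_of_pos hr]
  have hpi : 0 < π := Real.pi_pos
  set d : ℝ := (θ2 - θ1) / 2 with hd
  have hd1 : α / 2 ≤ d := by rw [hd]; linarith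
  have hd2 : d ≤ π - α / 2 := by rw [hd]; linarith
  have hsd : Real.sin (α / 2) ≤ Real.sin d := by
    rcases le_total d (π / 2) with h | h
    · exact Real.sin_le_sin_of_le_of_le_pi_div_two (by linarith) h (by linarith)
    · have : Real.sin d = Real.sin (π - d) := (Real.sin_pi_sub d).symm
      rw [this]
      exact Real.sin_le_sin_of_le_of_le_pi_div_two (by linarith) (by linarith) (by linarith)
  have habs : |Real.sin ((θ1 - θ2) / 2)| = Real.sin d := by
    have : (θ1 - θ2) / 2 = -d := by rw [hd]; ring
    rw [this, Real.sin_neg, abs_neg, abs_of_nonneg]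
    exact Real.sin_nonneg_of_nonneg_of_le_pi (by linarith) (by linarith)
  rw [habs]
  nlinarith



theorem ivt {f : ℝ → ℝ≥0∞} {a b : ℝ} (hab : a ≤ b) {s r : ℝ} (hs : 0 < s) (hr : 0 < r)
    (modl : ∀ u v, a ≤ u → u ≤ v → v ≤ b → f v ≤ f u + ENNReal.ofReal ((r * (v - u)) ^ s))
    {T : ℝ≥0∞} (h0 : f a ≤ T) (h1 : T ≤ f b) :
    ∃ t ∈ Icc a b, f t = T := by
  have small : ∀ ε : ℝ≥0, 0 < ε → ∃ δ : ℝ, 0 < δ ∧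
      ∀ u v, a ≤ u → u ≤ v → v ≤ b → v - u ≤ δ → f v ≤ f u + ε := by
    intro ε hε
    have hε' : (0:ℝ) < (ε : ℝ) := hε
    refine ⟨(ε : ℝ) ^ (1 / s) / r, by positivity, fun u v hu huv hv hd => ?_⟩
    refine (modl u v hu huv hv).trans ?_
    gcongr
    have hle : (r * (v - u)) ^ s ≤ (ε : ℝ) := by
      have h1 : r * (v - u) ≤ (ε : ℝ) ^ (1 / s) := by
        rw [← le_div_iff₀' hr]; exact hd
      have h2 : (r * (v - u)) ^ s ≤ ((ε : ℝ) ^ (1 / s)) ^ s :=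
        Real.rpow_le_rpow (by nlinarith) h1 hs.le
      rwa [← Real.rpow_mul hε'.le, one_div, inv_mul_cancel₀ hs.ne', Real.rpow_one] at h2
    calc ENNReal.ofReal ((r * (v - u)) ^ s) ≤ ENNReal.ofReal (ε : ℝ) :=
        ENNReal.ofReal_le_ofReal hle
      _ = (ε : ℝ≥0∞) := ENNReal.ofReal_coe_nnreal
  set S := {t | t ∈ Icc a b ∧ f t ≤ T} with hS
  have hane : a ∈ S := ⟨⟨le_refl a, hab⟩, h0⟩
  have hbdd : BddAbove S := ⟨b, fun t ht => ht.1.2⟩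
  set t0 := sSup S with ht0
  have hta : a ≤ t0 := le_csSup hbdd hane
  have htb : t0 ≤ b := csSup_le ⟨a, hane⟩ fun t ht => ht.1.2
  have upper : f t0 ≤ T := by
    refine ENNReal.le_of_forall_pos_le_add fun ε hε _ => ?_
    obtain ⟨δ, hδ, hδ'⟩ := small ε hε
    obtain ⟨t, htS, ht⟩ : ∃ t ∈ S, t0 - δ < t :=
      exists_lt_of_lt_csSup ⟨a, hane⟩ (by linarith)
    have htle : t ≤ t0 := le_csSup hbdd htS
    calc f t0 ≤ f t + ε := hδ' t t0 htS.1.1 htle htb (by linarith)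
      _ ≤ T + ε := by gcongr; exact htS.2
  have lower : T ≤ f t0 := by
    rcases eq_or_lt_of_le htb with heq | hlt
    · rw [heq]; exact h1
    · refine ENNReal.le_of_forall_pos_le_add fun ε hε _ => ?_
      obtain ⟨δ, hδ, hδ'⟩ := small ε hε
      set v := min b (t0 + δ) with hv
      have hv1 : t0 < v := lt_min hlt (by linarith)
      have hv2 : v ≤ b := min_le_left _ _
      have hv3 : v - t0 ≤ δ := by
        have := min_le_right b (t0 + δ); linarith
      have hvnS : v ∉ S := fun h => absurd (le_csSup hbdd h) (not_le.2 hv1)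
      have hfv : T ≤ f v := by
        by_contra h
        exact hvnS ⟨⟨by linarith, hv2⟩, le_of_not_gt fun hc => h (le_of_lt hc)⟩
      calc T ≤ f v := hfv
        _ ≤ f t0 + ε := hδ' t0 v hta hv1.le hv2 hv3
  exact ⟨t0, ⟨hta, htb⟩, le_antisymm upper lower⟩


end HCaux

open HCaux

theorem exists_three_separated_arcs
    (s : ℝ) (hs0 : 0 < s) (hs1 : s ≤ 1)
    (x : EuclideanSpace ℝ (Fin 2)) (r : ℝ) (hr : r ∈ Set.Icc (1 / 2 : ℝ) 2)
    (E : Set (EuclideanSpace ℝ (Fin 2))) (η γ : ℝ)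
    (hη : hausdorffContent s (Metric.sphere x r ∩ E) = ENNReal.ofReal η)
    (hη0 : 0 < η)
    (hγ : γ = (η / 16) ^ (1 / s)) (hγ16 : γ ≤ 1 / 16) :
    ∃ hp hm hc : Set (EuclideanSpace ℝ (Fin 2)),
      (hp ⊆ Metric.sphere x r ∧ IsPreconnected hp) ∧
      (hm ⊆ Metric.sphere x r ∧ IsPreconnected hm) ∧
      (hc ⊆ Metric.sphere x r ∧ IsPreconnected hc) ∧
      (∀ p ∈ hp, ∀ q ∈ hm, π⁻¹ * γ ≤ dist p q) ∧
      (∀ p ∈ hp, ∀ q ∈ hc, π⁻¹ * γ ≤ dist p q) ∧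
      (∀ p ∈ hm, ∀ q ∈ hc, π⁻¹ * γ ≤ dist p q) ∧
      (ENNReal.ofReal (η / 8) ≤ hausdorffContent s (hp ∩ E) ∧
        hausdorffContent s (hp ∩ E) ≤ ENNReal.ofReal (3 / 16 * η)) ∧
      (ENNReal.ofReal (η / 8) ≤ hausdorffContent s (hm ∩ E) ∧
        hausdorffContent s (hm ∩ E) ≤ ENNReal.ofReal (3 / 16 * η)) ∧
      (ENNReal.ofReal (η / 8) ≤ hausdorffContent s (hc ∩ E) ∧
        hausdorffContent s (hc ∩ E) ≤ ENNReal.ofReal (3 / 16 * η)) := by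
  obtain ⟨hr1, hr2⟩ := hr
  have hrpos : (0:ℝ) < r := by linarith
  have hπ : (0:ℝ) < π := Real.pi_pos
  have hπ3 : (3:ℝ) < π := by
    have := Real.pi_gt_three; linarith
  have hγpos : 0 < γ := by
    rw [hγ]; exact Real.rpow_pos_of_pos (by linarith) _
  have hγs : γ ^ s = η / 16 := by
    rw [hγ, ← Real.rpow_mul (by linarith : (0:ℝ) ≤ η / 16), one_div,
      inv_mul_cancel₀ hs0.ne', Real.rpow_one]
  set α := γ / r with hαdef
  have hαpos : 0 < α := by positivity
  have hrα : r * α = γ := by rw [hαdef, mul_div_assoc']; exact mul_div_cancel_left₀ γ hrpos.ne'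
  have hα2γ : α ≤ 2 * γ := by
    rw [hαdef, div_le_iff₀ hrpos]; nlinarith
  have hα8 : α ≤ 1 / 4 := by linarith
  have hαπ : α ≤ π := by linarith
  have key : ∀ u v : ℝ, u ≤ v → hausdorffContent s ((cpar x r '' Icc u v) ∩ E) ≤
      ENNReal.ofReal ((r * (v - u)) ^ s) := by
    intro u v huv
    refine (hc_mono s inter_subset_left).trans ((hc_le_diam_rpow hs0 _).trans ?_)
    calc EMetric.diam (cpar x r '' Icc u v) ^ s ≤ (ENNReal.ofReal (r * (v - u))) ^ s :=
        ENNReal.rpow_le_rpow (diam_cpar_le x hrpos.le huv) hs0.le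
      _ = ENNReal.ofReal ((r * (v - u)) ^ s) :=
        ENNReal.ofReal_rpow_of_nonneg (by nlinarith) hs0.le
  have gap : ∀ u v : ℝ, u ≤ v → v - u ≤ α → hausdorffContent s ((cpar x r '' Icc u v) ∩ E) ≤
      ENNReal.ofReal (η / 16) := by
    intro u v huv hva
    refine (key u v huv).trans (ENNReal.ofReal_le_ofReal ?_)
    calc (r * (v - u)) ^ s ≤ (r * α) ^ s := Real.rpow_le_rpow (by nlinarith) (by nlinarith) hs0.le
      _ = γ ^ s := by rw [hrα]
      _ = η / 16 := hγs
  have split : ∀ u v w : ℝ, u ≤ v → v ≤ w →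
      hausdorffContent s ((cpar x r '' Icc u w) ∩ E) ≤
        hausdorffContent s ((cpar x r '' Icc u v) ∩ E) +
        hausdorffContent s ((cpar x r '' Icc v w) ∩ E) := by
    intro u v w h1 h2
    have h3 : Icc u w = Icc u v ∪ Icc v w := (Icc_union_Icc_eq_Icc h1 h2).symm
    rw [h3, image_union, union_inter_distrib_right]
    exact hc_union_le s _ _
  set T := ENNReal.ofReal (3 / 16 * η) with hT
  have step : ∀ a0 : ℝ, 0 ≤ a0 → a0 ≤ 2 * π →
      T ≤ hausdorffContent s ((cpar x r '' Icc a0 (2 * π)) ∩ E) →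
      ∃ t ∈ Icc a0 (2 * π), hausdorffContent s ((cpar x r '' Icc a0 t) ∩ E) = T := by
    intro a0 ha0 ha02 hbig
    refine ivt ha02 hs0 hrpos (fun u v hu huv hv => ?_) ?_ hbig
    · exact (split a0 u v hu huv).trans (add_le_add_right (key u v huv) _)
    · have h0 : hausdorffContent s ((cpar x r '' Icc a0 a0) ∩ E) ≤ ENNReal.ofReal ((r * (a0 - a0)) ^ s) :=
        key a0 a0 le_rfl
      rw [show a0 - a0 = 0 by ring, mul_zero, Real.zero_rpow hs0.ne', ENNReal.ofReal_zero] at h0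
      exact h0.trans zero_le
  have htot : ENNReal.ofReal η ≤ hausdorffContent s ((cpar x r '' Icc 0 (2 * π)) ∩ E) := by
    rw [← hη]
    exact hc_mono s (inter_subset_inter_left E (sphere_subset_cpar x hrpos))
  have hTη : T ≤ ENNReal.ofReal η := ENNReal.ofReal_le_ofReal (by linarith)
  -- first arc
  obtain ⟨t1, ht1mem, ht1⟩ := step 0 le_rfl (by positivity) (hTη.trans htot)
  have room : ∀ u m : ℝ, 0 ≤ u → u ≤ 2 * π → 0 ≤ m →
      hausdorffContent s ((cpar x r '' Icc 0 u) ∩ E) ≤ ENNReal.ofReal m →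
      m + η / 16 < η → u + α ≤ 2 * π := by
    intro u m hu hu2 hm0 hcont hm
    by_contra hcon
    push_neg at hcon
    have hgap := gap u (2 * π) hu2 (by linarith)
    have hchain : ENNReal.ofReal η ≤ ENNReal.ofReal m + ENNReal.ofReal (η / 16) :=
      htot.trans ((split 0 u (2 * π) hu hu2).trans (add_le_add hcont hgap))
    rw [← ENNReal.ofReal_add hm0 (by linarith)] at hchain
    have := (ENNReal.ofReal_le_ofReal_iff (by linarith)).1 hchain
    linarith
  have remain : ∀ u m : ℝ, 0 ≤ u → u ≤ 2 * π → 0 ≤ m →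
      hausdorffContent s ((cpar x r '' Icc 0 u) ∩ E) ≤ ENNReal.ofReal m →
      ENNReal.ofReal (η - m) ≤ hausdorffContent s ((cpar x r '' Icc u (2 * π)) ∩ E) := by
    intro u m hu hu2 hm0 hcont
    have hchain : ENNReal.ofReal η ≤ ENNReal.ofReal m +
        hausdorffContent s ((cpar x r '' Icc u (2 * π)) ∩ E) :=
      htot.trans ((split 0 u (2 * π) hu hu2).trans (add_le_add_left hcont _))
    rw [ENNReal.ofReal_sub _ hm0, tsub_le_iff_left]
    exact hchain
  have room1 : t1 + α ≤ 2 * π :=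
    room t1 (3 / 16 * η) ht1mem.1 ht1mem.2 (by linarith) (le_of_eq ht1) (by linarith)
  -- cumulative bound up to t1 + α
  have b1 : hausdorffContent s ((cpar x r '' Icc 0 (t1 + α)) ∩ E) ≤ ENNReal.ofReal (4 / 16 * η) := by
    refine (split 0 t1 (t1 + α) ht1mem.1 (by linarith)).trans ?_
    rw [show (4:ℝ) / 16 * η = 3 / 16 * η + η / 16 by ring,
      ENNReal.ofReal_add (by linarith) (by linarith)]
    exact add_le_add (le_of_eq ht1) (gap t1 (t1 + α) (by linarith) (by linarith))
  -- second arc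
  have hrem2 : T ≤ hausdorffContent s ((cpar x r '' Icc (t1 + α) (2 * π)) ∩ E) := by
    have h := remain (t1 + α) (4 / 16 * η) (by linarith [ht1mem.1]) room1 (by linarith) b1
    exact (ENNReal.ofReal_le_ofReal (by linarith)).trans h
  obtain ⟨t2, ht2mem, ht2⟩ := step (t1 + α) (by linarith [ht1mem.1]) room1 hrem2
  have b2 : hausdorffContent s ((cpar x r '' Icc 0 t2) ∩ E) ≤ ENNReal.ofReal (7 / 16 * η) := by
    refine (split 0 (t1 + α) t2 (by linarith [ht1mem.1]) ht2mem.1).trans ?_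
    rw [show (7:ℝ) / 16 * η = 4 / 16 * η + 3 / 16 * η by ring,
      ENNReal.ofReal_add (by linarith) (by linarith)]
    exact add_le_add b1 (le_of_eq ht2)
  have room2 : t2 + α ≤ 2 * π :=
    room t2 (7 / 16 * η) (by linarith [ht1mem.1, ht2mem.1]) ht2mem.2 (by linarith) b2 (by linarith)
  have b2' : hausdorffContent s ((cpar x r '' Icc 0 (t2 + α)) ∩ E) ≤ ENNReal.ofReal (8 / 16 * η) := by
    refine (split 0 t2 (t2 + α) (by linarith [ht1mem.1, ht2mem.1]) (by linarith)).trans ?_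
    rw [show (8:ℝ) / 16 * η = 7 / 16 * η + η / 16 by ring,
      ENNReal.ofReal_add (by linarith) (by linarith)]
    exact add_le_add b2 (gap t2 (t2 + α) (by linarith) (by linarith))
  -- third arc
  have hrem3 : T ≤ hausdorffContent s ((cpar x r '' Icc (t2 + α) (2 * π)) ∩ E) := by
    have h := remain (t2 + α) (8 / 16 * η) (by linarith [ht1mem.1, ht2mem.1]) room2 (by linarith) b2'
    exact (ENNReal.ofReal_le_ofReal (by linarith)).trans h
  obtain ⟨t3, ht3mem, ht3⟩ := step (t2 + α) (by linarith [ht1mem.1, ht2mem.1]) room2 hrem3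
  have b3 : hausdorffContent s ((cpar x r '' Icc 0 t3) ∩ E) ≤ ENNReal.ofReal (11 / 16 * η) := by
    refine (split 0 (t2 + α) t3 (by linarith [ht1mem.1, ht2mem.1]) ht3mem.1).trans ?_
    rw [show (11:ℝ) / 16 * η = 8 / 16 * η + 3 / 16 * η by ring,
      ENNReal.ofReal_add (by linarith) (by linarith)]
    exact add_le_add b2' (le_of_eq ht3)
  have room3 : t3 + α ≤ 2 * π :=
    room t3 (11 / 16 * η) (by linarith [ht1mem.1, ht2mem.1, ht3mem.1]) ht3mem.2
      (by linarith) b3 (by linarith)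
  -- separation constant
  have hsinbound : π⁻¹ * γ ≤ 2 * r * Real.sin (α / 2) := by
    have hj : 2 / π * (α / 2) ≤ Real.sin (α / 2) :=
      Real.mul_le_sin (by linarith) (by nlinarith)
    have h2r : (0:ℝ) ≤ 2 * r := by linarith
    have h3 : 2 * r * (2 / π * (α / 2)) ≤ 2 * r * Real.sin (α / 2) :=
      mul_le_mul_of_nonneg_left hj h2r
    have h4 : 2 * r * (2 / π * (α / 2)) = 2 * (r * α) * π⁻¹ := by field_simp
    rw [h4, hrα] at h3
    nlinarith [inv_pos.2 hπ, hγpos]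
  have sep : ∀ θ1 θ2 : ℝ, α ≤ θ2 - θ1 → θ2 - θ1 ≤ 2 * π - α →
      π⁻¹ * γ ≤ dist (cpar x r θ1) (cpar x r θ2) := fun θ1 θ2 h1 h2 =>
    hsinbound.trans (dist_cpar_ge x hrpos hαpos hαπ h1 h2)
  -- the three arcs
  refine ⟨cpar x r '' Icc 0 t1, cpar x r '' Icc (t1 + α) t2, cpar x r '' Icc (t2 + α) t3,
    ?_, ?_, ?_, ?_, ?_, ?_, ?_, ?_, ?_⟩
  · exact ⟨by rintro p ⟨θ, hθ, rfl⟩; exact cpar_mem_sphere x hrpos.le θ,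
      (isPreconnected_Icc).image _ (continuous_cpar x r).continuousOn⟩
  · exact ⟨by rintro p ⟨θ, hθ, rfl⟩; exact cpar_mem_sphere x hrpos.le θ,
      (isPreconnected_Icc).image _ (continuous_cpar x r).continuousOn⟩
  · exact ⟨by rintro p ⟨θ, hθ, rfl⟩; exact cpar_mem_sphere x hrpos.le θ,
      (isPreconnected_Icc).image _ (continuous_cpar x r).continuousOn⟩
  · rintro p ⟨θ1, hθ1, rfl⟩ q ⟨θ2, hθ2, rfl⟩
    exact sep θ1 θ2 (by linarith [hθ1.2, hθ2.1]) (by linarith [hθ1.1, hθ2.2])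
  · rintro p ⟨θ1, hθ1, rfl⟩ q ⟨θ2, hθ2, rfl⟩
    exact sep θ1 θ2 (by linarith [hθ1.2, hθ2.1, ht2mem.1]) (by linarith [hθ1.1, hθ2.2])
  · rintro p ⟨θ1, hθ1, rfl⟩ q ⟨θ2, hθ2, rfl⟩
    exact sep θ1 θ2 (by linarith [hθ1.2, hθ2.1]) (by linarith [hθ1.1, hθ2.2, ht1mem.1])
  · exact ⟨ht1 ▸ ENNReal.ofReal_le_ofReal (by linarith), le_of_eq ht1⟩
  · exact ⟨ht2 ▸ ENNReal.ofReal_le_ofReal (by linarith), le_of_eq ht2⟩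
  · exact ⟨ht3 ▸ ENNReal.ofReal_le_ofReal (by linarith), le_of_eq ht3⟩
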